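/- Let $(-,-)$ be the bilinear form on the Hecke algebra $H = H_q(n)$ over a field $K$ defined on the standard basis by $(T_u, T_v) = q^{\ell(u)}$ if $u = v$ and $0$ otherwise, where $q \in K^\times$. Define $f(h_1, h_2) := (h_1, h_2^*)$ where $*$ is the anti-automorphism with $T_w^* = T_{w^{-1}}$. Then $f$ is a symmetric associative non-degenerate bilinear form; in particular $H_q(n)$ is a symmetric algebra. -/

import Mathlib

noncomputable section

open FreeAlgebra

/-- The Coxeter length of a permutation, i.e. its number of inversions. -/
def len {n : ℕ} (w : Equiv.Perm (Fin n)) : ℕ :=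
  (Finset.univ.filter (fun p : Fin n × Fin n => p.1 < p.2 ∧ w p.2 < w p.1)).card

/-- The defining relations of the Hecke algebra `H_q(n+1)` of type `Aₙ`: generators
`T i` for `i : Fin n`, braid relations, and quadratic relations
`Tᵢ² = (q-1)Tᵢ + q`. -/
inductive HeckeRel (K : Type) [Field K] (q : K) (n : ℕ) :
    FreeAlgebra K (Fin n) → FreeAlgebra K (Fin n) → Prop
  | braid (i j : Fin n) (h : (i : ℕ) + 1 = j) :
      HeckeRel K q n (ι K i * ι K j * ι K i) (ι K j * ι K i * ι K j)
  | comm (i j : Fin n) (h : (i : ℕ) + 2 ≤ j) :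
      HeckeRel K q n (ι K i * ι K j) (ι K j * ι K i)
  | quad (i : Fin n) :
      HeckeRel K q n (ι K i * ι K i)
        (algebraMap K (FreeAlgebra K (Fin n)) (q - 1) * ι K i +
          algebraMap K (FreeAlgebra K (Fin n)) q)

/-- The Iwahori–Hecke algebra `H_q(n+1)` of the symmetric group `S_{n+1}`. -/
abbrev Hecke (K : Type) [Field K] (q : K) (n : ℕ) := RingQuot (HeckeRel K q n)

/-- The generator `Tᵢ` of the Hecke algebra. -/
def Tgen (K : Type) [Field K] (q : K) (n : ℕ) (i : Fin n) : Hecke K q n :=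
  RingQuot.mkAlgHom K (HeckeRel K q n) (ι K i)

/-- The adjacent transposition `sᵢ = (i, i+1)` in `S_{n+1}`. -/
def sgen {n : ℕ} (i : Fin n) : Equiv.Perm (Fin (n + 1)) :=
  Equiv.swap i.castSucc i.succ

/-- The product `T_{i₁} ⋯ T_{i_k}` attached to a word `l = [i₁, …, i_k]`. -/
def wordProd (K : Type) [Field K] (q : K) (n : ℕ) (l : List (Fin n)) : Hecke K q n :=
  (l.map (Tgen K q n)).prod

/-- The permutation `s_{i₁} ⋯ s_{i_k}` attached to a word `l = [i₁, …, i_k]`. -/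
def wordPerm {n : ℕ} (l : List (Fin n)) : Equiv.Perm (Fin (n + 1)) :=
  (l.map sgen).prod

lemma len_one {n : ℕ} : len (1 : Equiv.Perm (Fin n)) = 0 := by
  simp only [len]
  rw [Finset.card_eq_zero, Finset.filter_eq_empty_iff]
  rintro p - ⟨h1, h2⟩
  exact absurd h1 h2.asymm

lemma sgen_apply_self {n : ℕ} (i : Fin n) (x : Fin (n + 1)) : sgen i (sgen i x) = x :=
  Equiv.swap_apply_self _ _ _

lemma sgen_mul_self {n : ℕ} (i : Fin n) : sgen i * sgen i = 1 :=
  Equiv.swap_mul_self _ _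

lemma sgen_inv {n : ℕ} (i : Fin n) : (sgen i)⁻¹ = sgen i := Equiv.swap_inv _ _

lemma swap_lt {n : ℕ} (i : Fin n) {a b : Fin (n + 1)} (hab : a < b)
    (hne : ¬(a = i.castSucc ∧ b = i.succ)) : sgen i a < sgen i b := by
  simp only [sgen, Equiv.swap_apply_def]
  split_ifs with h1 h2 h3 h4 <;>
    simp only [Fin.lt_def, Fin.ext_iff, Fin.val_succ, Fin.coe_castSucc, not_and] at * <;>
    omega

lemma len_mul_sgen_of_lt {n : ℕ} (w : Equiv.Perm (Fin (n + 1))) (i : Fin n)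
    (h : w i.castSucc < w i.succ) : len (w * sgen i) = len w + 1 := by
  classical
  set c := i.castSucc with hc
  set S := i.succ with hS
  have hcS : c < S := Fin.castSucc_lt_succ (i := i)
  set F : Fin (n+1) × Fin (n+1) → Fin (n+1) × Fin (n+1) := fun p => (sgen i p.1, sgen i p.2)
    with hF
  have hFinj : Function.Injective F := fun p q hpq => by
    have h1 : sgen i p.1 = sgen i q.1 := congrArg Prod.fst hpq
    have h2 : sgen i p.2 = sgen i q.2 := congrArg Prod.snd hpq
    exact Prod.ext ((sgen i).injective h1) ((sgen i).injective h2)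
  set A := Finset.univ.filter
    (fun p : Fin (n+1) × Fin (n+1) => p.1 < p.2 ∧ (w * sgen i) p.2 < (w * sgen i) p.1) with hA
  set Bs := Finset.univ.filter
    (fun p : Fin (n+1) × Fin (n+1) => p.1 < p.2 ∧ w p.2 < w p.1) with hBs
  have key : A = insert (c, S) (Bs.image F) := by
    ext p
    simp only [hA, hBs, Finset.mem_insert, Finset.mem_image, Finset.mem_filter,
      Finset.mem_univ, true_and]
    simp only [Equiv.Perm.mul_apply]
    constructor
    · rintro ⟨h1, h2⟩
      by_cases hp : p = (c, S)
      · exact Or.inl hp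
      · refine Or.inr ⟨F p, ⟨?_, ?_⟩, ?_⟩
        · refine swap_lt i h1 ?_
          rintro ⟨e1, e2⟩; exact hp (Prod.ext e1 e2)
        · simpa [hF, sgen_apply_self] using h2
        · simp [hF, sgen_apply_self]
    · rintro (hp | ⟨q, ⟨hq1, hq2⟩, rfl⟩)
      · subst hp
        refine ⟨hcS, ?_⟩
        simpa [hc, hS, sgen, Equiv.swap_apply_left, Equiv.swap_apply_right] using h
      · refine ⟨?_, ?_⟩
        · refine swap_lt i hq1 ?_
          rintro ⟨e1, e2⟩
          rw [e1, e2] at hq2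
          exact absurd h hq2.asymm
        · simpa [hF, sgen_apply_self] using hq2
  have hnotmem : (c, S) ∉ Bs.image F := by
    simp only [hBs, Finset.mem_image, Finset.mem_filter, Finset.mem_univ, true_and, not_exists]
    rintro q ⟨⟨hq1, -⟩, e⟩
    have e1 : sgen i q.1 = c := congrArg Prod.fst e
    have e2 : sgen i q.2 = S := congrArg Prod.snd e
    have : q.1 = S := by
      have := congrArg (sgen i) e1
      rwa [sgen_apply_self, sgen, Equiv.swap_apply_left] at this
    have : q.2 = c := by
      have := congrArg (sgen i) e2
      rwa [sgen_apply_self, sgen, Equiv.swap_apply_right] at this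
    rw [‹q.1 = S›, this] at hq1
    exact absurd hcS hq1.asymm
  have : len (w * sgen i) = A.card := rfl
  rw [this, key, Finset.card_insert_of_notMem hnotmem,
    Finset.card_image_of_injective _ hFinj]
  rfl

lemma len_mul_sgen_of_gt {n : ℕ} (w : Equiv.Perm (Fin (n + 1))) (i : Fin n)
    (h : w i.succ < w i.castSucc) : len w = len (w * sgen i) + 1 := by
  have := len_mul_sgen_of_lt (w * sgen i) i ?_
  · rw [mul_assoc, sgen_mul_self, mul_one] at this
    omega
  · simpa [Equiv.Perm.mul_apply, sgen, Equiv.swap_apply_left, Equiv.swap_apply_right] using h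

lemma len_mul_sgen_cases {n : ℕ} (w : Equiv.Perm (Fin (n + 1))) (i : Fin n) :
    len (w * sgen i) = len w + 1 ∨ len w = len (w * sgen i) + 1 := by
  rcases lt_or_gt_of_ne (fun e => (Fin.castSucc_lt_succ (i := i)).ne (w.injective e)) with h | h
  · exact Or.inl (len_mul_sgen_of_lt w i h)
  · exact Or.inr (len_mul_sgen_of_gt w i h)

lemma descent_exists {n : ℕ} (w : Equiv.Perm (Fin (n + 1))) (hw : w ≠ 1) :
    ∃ i : Fin n, w i.succ < w i.castSucc := by
  by_contra hcon
  push_neg at hcon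
  have hmono : StrictMono w := by
    rw [Fin.strictMono_iff_lt_succ]
    intro i
    rcases lt_or_gt_of_ne (fun e => (Fin.castSucc_lt_succ (i := i)).ne (w.injective e)) with h | h
    · exact h
    · exact absurd (hcon i) (not_le.mpr h)
  apply hw
  ext x
  have hr : Set.range w = Set.range (id : Fin (n+1) → Fin (n+1)) := by
    simp [Set.range_id, w.surjective.range_eq]
  have hfun := (StrictMono.range_inj hmono strictMono_id).mp hr
  exact congrArg Fin.val (congrFun hfun x)

lemma wordPerm_nil {n : ℕ} : wordPerm ([] : List (Fin n)) = 1 := rfl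

lemma wordPerm_cons {n : ℕ} (a : Fin n) (l : List (Fin n)) :
    wordPerm (a :: l) = sgen a * wordPerm l := by simp [wordPerm]

lemma wordPerm_append {n : ℕ} (l l' : List (Fin n)) :
    wordPerm (l ++ l') = wordPerm l * wordPerm l' := by simp [wordPerm]

lemma wordPerm_singleton {n : ℕ} (a : Fin n) : wordPerm [a] = sgen a := by simp [wordPerm]

/-- Every permutation has a reduced word. -/
lemma reduced_word_exists {n : ℕ} (w : Equiv.Perm (Fin (n + 1))) :
    ∃ l : List (Fin n), wordPerm l = w ∧ l.length = len w := by
  generalize hk : len w = k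
  induction k using Nat.strong_induction_on generalizing w with
  | _ k ih =>
  subst hk
  by_cases hw : w = 1
  · subst hw; exact ⟨[], rfl, by simp [len_one]⟩
  · obtain ⟨i, hi⟩ := descent_exists w hw
    have hlen := len_mul_sgen_of_gt w i hi
    obtain ⟨l, hl1, hl2⟩ := ih (len (w * sgen i)) (by omega) (w * sgen i) rfl
    refine ⟨l ++ [i], ?_, ?_⟩
    · rw [wordPerm_append, wordPerm_singleton, hl1, mul_assoc, sgen_mul_self, mul_one]
    · simp only [List.length_append, List.length_singleton, hl2]; omega

lemma len_wordPerm_le {n : ℕ} (l : List (Fin n)) : len (wordPerm l) ≤ l.length := by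
  induction l using List.reverseRecOn with
  | nil => simp [wordPerm_nil, len_one]
  | append_singleton l a ih =>
    rw [wordPerm_append, wordPerm_singleton]
    rcases len_mul_sgen_cases (wordPerm l) a with h | h <;> simp only [List.length_append, List.length_singleton] <;> omega

lemma wordPerm_reverse {n : ℕ} (l : List (Fin n)) :
    wordPerm l.reverse = (wordPerm l)⁻¹ := by
  induction l with
  | nil => simp [wordPerm_nil]
  | cons a l ih =>
    rw [List.reverse_cons, wordPerm_append, wordPerm_singleton, ih, wordPerm_cons,
      mul_inv_rev, sgen_inv]

lemma len_inv {n : ℕ} (w : Equiv.Perm (Fin (n + 1))) : len w⁻¹ = len w := by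
  have key : ∀ u : Equiv.Perm (Fin (n + 1)), len u⁻¹ ≤ len u := by
    intro u
    obtain ⟨l, hl1, hl2⟩ := reduced_word_exists u
    calc len u⁻¹ = len (wordPerm l.reverse) := by rw [wordPerm_reverse, hl1]
    _ ≤ l.reverse.length := len_wordPerm_le _
    _ = len u := by simpa using hl2
  exact le_antisymm (key w) (by simpa using key w⁻¹)

lemma left_descent_exists {n : ℕ} (w : Equiv.Perm (Fin (n + 1))) (hw : w ≠ 1) :
    ∃ i : Fin n, len w = len (sgen i * w) + 1 := by
  obtain ⟨i, hi⟩ := descent_exists w⁻¹ (by simpa using hw)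
  have h1 := len_mul_sgen_of_gt w⁻¹ i hi
  refine ⟨i, ?_⟩
  have e : (w⁻¹ * sgen i)⁻¹ = sgen i * w := by
    rw [mul_inv_rev, inv_inv, sgen_inv]
  rw [← len_inv w, h1, ← e, len_inv]

lemma len_sgen {n : ℕ} (i : Fin n) : len (sgen i) = 1 := by
  have := len_mul_sgen_of_lt 1 i (by simpa using Fin.castSucc_lt_succ i)
  simpa [len_one] using this

/-- `Tw` is the standard basis `{T_w : w ∈ S_{n+1}}` of the Hecke algebra:
`T_w = T_{i₁} ⋯ T_{i_k}` for any reduced word `w = s_{i₁} ⋯ s_{i_k}`. -/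
def IsTBasis (K : Type) [Field K] (q : K) (n : ℕ)
    (Tw : Equiv.Perm (Fin (n + 1)) → Hecke K q n) : Prop :=
  ∀ (w : Equiv.Perm (Fin (n + 1))) (l : List (Fin n)),
    wordPerm l = w → l.length = len w → Tw w = wordProd K q n l

section HeckeLemmas

variable {K : Type} [Field K] {q : K} {n : ℕ}

lemma wordProd_nil : wordProd K q n [] = 1 := rfl

lemma wordProd_cons (a : Fin n) (l : List (Fin n)) :
    wordProd K q n (a :: l) = Tgen K q n a * wordProd K q n l := by simp [wordProd]

lemma wordProd_append (l l' : List (Fin n)) :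
    wordProd K q n (l ++ l') = wordProd K q n l * wordProd K q n l' := by simp [wordProd]

lemma wordProd_singleton (a : Fin n) : wordProd K q n [a] = Tgen K q n a := by simp [wordProd]

lemma Tgen_sq (i : Fin n) :
    Tgen K q n i * Tgen K q n i = (q - 1) • Tgen K q n i + q • 1 := by
  have h := RingQuot.mkAlgHom_rel K (HeckeRel.quad (K := K) (q := q) (n := n) i)
  simp only [map_mul, map_add, AlgHom.commutes] at h
  rw [Tgen, h, Algebra.smul_def, Algebra.smul_def, mul_one]

variable {Tw : Equiv.Perm (Fin (n + 1)) → Hecke K q n}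

lemma Tw_one (hTw : IsTBasis K q n Tw) : Tw 1 = 1 := by
  rw [hTw 1 [] rfl (by simp [len_one]), wordProd_nil]

lemma Tw_sgen (hTw : IsTBasis K q n Tw) (i : Fin n) : Tw (sgen i) = Tgen K q n i := by
  rw [hTw (sgen i) [i] (wordPerm_singleton i) (by simp [len_sgen]), wordProd_singleton]

lemma Tw_mul_Tgen_of_lt (hTw : IsTBasis K q n Tw) {w : Equiv.Perm (Fin (n + 1))} {i : Fin n}
    (h : len (w * sgen i) = len w + 1) :
    Tw w * Tgen K q n i = Tw (w * sgen i) := by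
  obtain ⟨l, hl1, hl2⟩ := reduced_word_exists w
  rw [hTw w l hl1 hl2,
    hTw (w * sgen i) (l ++ [i]) (by rw [wordPerm_append, wordPerm_singleton, hl1])
      (by simp [hl2, h]),
    wordProd_append, wordProd_singleton]

lemma Tw_mul_Tgen_of_gt (hTw : IsTBasis K q n Tw) {w : Equiv.Perm (Fin (n + 1))} {i : Fin n}
    (h : len w = len (w * sgen i) + 1) :
    Tw w * Tgen K q n i = (q - 1) • Tw w + q • Tw (w * sgen i) := by
  have hu : (w * sgen i) * sgen i = w := by rw [mul_assoc, sgen_mul_self, mul_one]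
  have h2 : len ((w * sgen i) * sgen i) = len (w * sgen i) + 1 := by rw [hu]; omega
  have e1 : Tw (w * sgen i) * Tgen K q n i = Tw w := by rw [Tw_mul_Tgen_of_lt hTw h2, hu]
  calc Tw w * Tgen K q n i = Tw (w * sgen i) * (Tgen K q n i * Tgen K q n i) := by
        rw [← e1, mul_assoc]
  _ = Tw (w * sgen i) * ((q - 1) • Tgen K q n i + q • 1) := by rw [Tgen_sq]
  _ = (q - 1) • (Tw (w * sgen i) * Tgen K q n i) + q • Tw (w * sgen i) := by
        rw [mul_add, mul_smul_comm, mul_smul_comm, mul_one]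
  _ = (q - 1) • Tw w + q • Tw (w * sgen i) := by rw [e1]

lemma Tgen_mul_Tw_of_lt (hTw : IsTBasis K q n Tw) {w : Equiv.Perm (Fin (n + 1))} {i : Fin n}
    (h : len (sgen i * w) = len w + 1) :
    Tgen K q n i * Tw w = Tw (sgen i * w) := by
  obtain ⟨l, hl1, hl2⟩ := reduced_word_exists w
  rw [hTw w l hl1 hl2,
    hTw (sgen i * w) (i :: l) (by rw [wordPerm_cons, hl1]) (by simp [hl2, h]),
    wordProd_cons]

end HeckeLemmas

section Span

variable {K : Type} [Field K] {q : K} {n : ℕ} {Tw : Equiv.Perm (Fin (n + 1)) → Hecke K q n}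

lemma Tw_mem_span (w : Equiv.Perm (Fin (n + 1))) :
    Tw w ∈ Submodule.span K (Set.range Tw) :=
  Submodule.subset_span ⟨w, rfl⟩

lemma mul_Tgen_mem (hTw : IsTBasis K q n Tw) {x : Hecke K q n}
    (hx : x ∈ Submodule.span K (Set.range Tw)) (i : Fin n) :
    x * Tgen K q n i ∈ Submodule.span K (Set.range Tw) := by
  induction hx using Submodule.span_induction with
  | mem x hx =>
    obtain ⟨w, rfl⟩ := hx
    rcases len_mul_sgen_cases w i with h | h
    · rw [Tw_mul_Tgen_of_lt hTw h]; exact Tw_mem_span _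
    · rw [Tw_mul_Tgen_of_gt hTw h]
      exact Submodule.add_mem _ (Submodule.smul_mem _ _ (Tw_mem_span _))
        (Submodule.smul_mem _ _ (Tw_mem_span _))
  | zero => rw [zero_mul]; exact Submodule.zero_mem _
  | add x y hx hy ihx ihy => rw [add_mul]; exact Submodule.add_mem _ ihx ihy
  | smul a x hx ihx => rw [smul_mul_assoc]; exact Submodule.smul_mem _ _ ihx

lemma mul_Tw_mem (hTw : IsTBasis K q n Tw) (v : Equiv.Perm (Fin (n + 1))) :
    ∀ x ∈ Submodule.span K (Set.range Tw), x * Tw v ∈ Submodule.span K (Set.range Tw) := by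
  generalize hk : len v = k
  induction k using Nat.strong_induction_on generalizing v with
  | _ k ih =>
  subst hk
  by_cases hv : v = 1
  · subst hv; intro x hx; rwa [Tw_one hTw, mul_one]
  · obtain ⟨i, hi⟩ := left_descent_exists v hv
    have hvv : sgen i * (sgen i * v) = v := by rw [← mul_assoc, sgen_mul_self, one_mul]
    have hlen : len (sgen i * (sgen i * v)) = len (sgen i * v) + 1 := by rw [hvv]; omega
    have hTv : Tw v = Tgen K q n i * Tw (sgen i * v) := by
      rw [Tgen_mul_Tw_of_lt hTw hlen, hvv]
    intro x hx
    rw [hTv, ← mul_assoc]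
    exact ih (len (sgen i * v)) (by omega) (sgen i * v) rfl _ (mul_Tgen_mem hTw hx i)

lemma span_mul_mem (hTw : IsTBasis K q n Tw) {x y : Hecke K q n}
    (hx : x ∈ Submodule.span K (Set.range Tw)) (hy : y ∈ Submodule.span K (Set.range Tw)) :
    x * y ∈ Submodule.span K (Set.range Tw) := by
  induction hy using Submodule.span_induction with
  | mem y hy =>
    obtain ⟨v, rfl⟩ := hy
    exact mul_Tw_mem hTw v x hx
  | zero => rw [mul_zero]; exact Submodule.zero_mem _
  | add y z hy hz ihy ihz => rw [mul_add]; exact Submodule.add_mem _ ihy ihz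
  | smul a y hy ihy => rw [mul_smul_comm]; exact Submodule.smul_mem _ _ ihy

lemma span_Tw_top (hTw : IsTBasis K q n Tw) :
    Submodule.span K (Set.range Tw) = ⊤ := by
  set S : Subalgebra K (Hecke K q n) :=
    (Submodule.span K (Set.range Tw)).toSubalgebra
      (by rw [← Tw_one hTw]; exact Tw_mem_span 1)
      (fun x y hx hy => span_mul_mem hTw hx hy) with hS
  have htop : Algebra.adjoin K (Set.range (Tgen K q n)) = ⊤ := by
    have h1 : Set.range (Tgen K q n) =
        (RingQuot.mkAlgHom K (HeckeRel K q n)) '' Set.range (ι K) := by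
      rw [← Set.range_comp]; rfl
    rw [h1, ← AlgHom.map_adjoin, FreeAlgebra.adjoin_range_ι, Algebra.map_top,
      AlgHom.range_eq_top]
    exact RingQuot.mkAlgHom_surjective K _
  have hle : Algebra.adjoin K (Set.range (Tgen K q n)) ≤ S := by
    apply Algebra.adjoin_le
    rintro x ⟨i, rfl⟩
    show Tgen K q n i ∈ Submodule.span K (Set.range Tw)
    rw [← Tw_sgen hTw i]
    exact Tw_mem_span _
  rw [htop] at hle
  rw [eq_top_iff]
  intro x _
  exact hle (show x ∈ (⊤ : Subalgebra K (Hecke K q n)) from trivial)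

end Span

section Key

variable {K : Type} [Field K] {q : K} {n : ℕ} {Tw : Equiv.Perm (Fin (n + 1)) → Hecke K q n}

lemma keyC (hTw : IsTBasis K q n Tw)
    (B : Hecke K q n →ₗ[K] Hecke K q n →ₗ[K] K)
    (hB : ∀ u v : Equiv.Perm (Fin (n + 1)),
      B (Tw u) (Tw v) = if u = v then q ^ len u else 0)
    (v u : Equiv.Perm (Fin (n + 1))) :
    B (Tw u * Tw v) (Tw 1) = if u = v⁻¹ then q ^ len u else 0 := by
  generalize hk : len v = k
  induction k using Nat.strong_induction_on generalizing v u with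
  | _ k ih =>
  subst hk
  by_cases hv : v = 1
  · subst hv
    have e : Tw u * Tw (1 : Equiv.Perm (Fin (n + 1))) = Tw u := by rw [Tw_one hTw, mul_one]
    rw [e, hB u 1, inv_one]
  · obtain ⟨i, hi⟩ := left_descent_exists v hv
    set v' := sgen i * v with hv'def
    have hvv : sgen i * v' = v := by rw [hv'def, ← mul_assoc, sgen_mul_self, one_mul]
    have hlenv' : len v = len v' + 1 := hi
    have hlen : len (sgen i * v') = len v' + 1 := by rw [hvv]; omega
    have hTv : Tw v = Tgen K q n i * Tw v' := by rw [Tgen_mul_Tw_of_lt hTw hlen, hvv]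
    have hvinv : v⁻¹ = v'⁻¹ * sgen i := by rw [← hvv, mul_inv_rev, sgen_inv]
    have hcond : ∀ x : Equiv.Perm (Fin (n + 1)), x * sgen i = v'⁻¹ ↔ x = v⁻¹ := by
      intro x
      rw [hvinv]
      constructor
      · intro h; rw [← h, mul_assoc, sgen_mul_self, mul_one]
      · intro h; rw [h, mul_assoc, sgen_mul_self, mul_one]
    rw [hTv, ← mul_assoc]
    rcases len_mul_sgen_cases u i with h | h
    · rw [Tw_mul_Tgen_of_lt hTw h, ih (len v') (by omega) v' (u * sgen i) rfl]
      by_cases hu : u = v⁻¹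
      · exfalso
        have e1 : u * sgen i = v'⁻¹ := (hcond u).mpr hu
        have l1 : len (u * sgen i) = len v' := by rw [e1, len_inv]
        have l2 : len u = len v := by rw [hu, len_inv]
        omega
      · rw [if_neg (fun he => hu ((hcond u).mp he)), if_neg hu]
    · rw [Tw_mul_Tgen_of_gt hTw h, add_mul, smul_mul_assoc, smul_mul_assoc,
        map_add, map_smul, map_smul, LinearMap.add_apply, LinearMap.smul_apply,
        LinearMap.smul_apply, ih (len v') (by omega) v' u rfl,
        ih (len v') (by omega) v' (u * sgen i) rfl, smul_eq_mul, smul_eq_mul]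
      by_cases hu : u = v⁻¹
      · have e1 : u * sgen i = v'⁻¹ := (hcond u).mpr hu
        have hne : u ≠ v'⁻¹ := by
          intro he
          have l1 : len u = len v' := by rw [he, len_inv]
          have l2 : len u = len v := by rw [hu, len_inv]
          omega
        rw [if_pos e1, if_neg hne, if_pos hu]
        have hl : len u = len (u * sgen i) + 1 := h
        rw [hl, pow_succ]
        ring
      · have hne1 : u * sgen i ≠ v'⁻¹ := fun he => hu ((hcond u).mp he)
        have hne2 : u ≠ v'⁻¹ := by
          intro he
          have e2 : u * sgen i = v⁻¹ := by rw [he, ← hvinv]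
          have l1 : len (u * sgen i) = len v := by rw [e2, len_inv]
          have l2 : len u = len v' := by rw [he, len_inv]
          omega
        rw [if_neg hne2, if_neg hne1, if_neg hu]
        ring

end Key


/-- Let `(-,-)` be the bilinear form on `H = H_q(n+1)` with `(T_u, T_v) = δ_{u,v} q^{ℓ(u)}`
(`q ≠ 0`), and let `*` be the anti-automorphism with `T_w* = T_{w⁻¹}`. Then
`f(h₁, h₂) := (h₁, h₂*)` is a symmetric, associative, non-degenerate bilinear form;
in particular `H_q(n+1)` is a symmetric algebra. -/
theorem hecke_symmetrizing_form (K : Type) [Field K] (q : K) (hq : q ≠ 0) (n : ℕ)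
    (Tw : Equiv.Perm (Fin (n + 1)) → Hecke K q n) (hTw : IsTBasis K q n Tw)
    (B : Hecke K q n →ₗ[K] Hecke K q n →ₗ[K] K)
    (hB : ∀ u v : Equiv.Perm (Fin (n + 1)),
      B (Tw u) (Tw v) = if u = v then q ^ len u else 0)
    (star : Hecke K q n →ₗ[K] Hecke K q n)
    (hstar : ∀ w : Equiv.Perm (Fin (n + 1)), star (Tw w) = Tw w⁻¹) :
    (∀ h₁ h₂ : Hecke K q n, B h₁ (star h₂) = B h₂ (star h₁)) ∧
      (∀ h₁ h₂ h₃ : Hecke K q n, B (h₁ * h₂) (star h₃) = B h₁ (star (h₂ * h₃))) ∧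
      (∀ h₁ : Hecke K q n, (∀ h₂ : Hecke K q n, B h₁ (star h₂) = 0) → h₁ = 0) := by
  classical
  have hspan := span_Tw_top hTw
  set F : Hecke K q n →ₗ[K] Hecke K q n →ₗ[K] K := B.compl₂ star with hF
  have hFapp : ∀ a b, F a b = B a (star b) := fun a b => rfl
  have hFTw : ∀ u v, F (Tw u) (Tw v) = if u = v⁻¹ then q ^ len u else 0 := by
    intro u v
    rw [hFapp, hstar, hB]
  set G : Hecke K q n →ₗ[K] Hecke K q n →ₗ[K] K :=
    (LinearMap.mul K (Hecke K q n)).compr₂ (B.flip (Tw 1)) with hG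
  have hGapp : ∀ a b, G a b = B (a * b) (Tw 1) := fun a b => rfl
  -- F = G
  have hFG : F = G := by
    apply LinearMap.ext_on_range hspan
    intro u
    apply LinearMap.ext_on_range hspan
    intro v
    rw [hFTw, hGapp, keyC hTw B hB]
  -- symmetry: F = F.flip
  have hFflip : F = F.flip := by
    apply LinearMap.ext_on_range hspan
    intro u
    apply LinearMap.ext_on_range hspan
    intro v
    rw [LinearMap.flip_apply, hFTw, hFTw]
    by_cases huv : u = v⁻¹
    · rw [if_pos huv, if_pos (by rw [huv, inv_inv]), huv, len_inv]
    · rw [if_neg huv, if_neg (fun h => huv (by rw [h, inv_inv]))]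
  refine ⟨?_, ?_, ?_⟩
  · intro h₁ h₂
    calc B h₁ (star h₂) = F h₁ h₂ := rfl
    _ = F.flip h₁ h₂ := by rw [← hFflip]
    _ = B h₂ (star h₁) := rfl
  · intro h₁ h₂ h₃
    calc B (h₁ * h₂) (star h₃) = F (h₁ * h₂) h₃ := rfl
    _ = G (h₁ * h₂) h₃ := by rw [hFG]
    _ = B (h₁ * h₂ * h₃) (Tw 1) := rfl
    _ = B (h₁ * (h₂ * h₃)) (Tw 1) := by rw [mul_assoc]
    _ = G h₁ (h₂ * h₃) := rfl
    _ = F h₁ (h₂ * h₃) := by rw [hFG]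
    _ = B h₁ (star (h₂ * h₃)) := rfl
  · intro h₁ hyp
    have hB2 : ∀ v, B h₁ (Tw v) = 0 := by
      intro v
      have := hyp (Tw v⁻¹)
      rwa [hstar, inv_inv] at this
    have hmem : h₁ ∈ Submodule.span K (Set.range Tw) := by rw [hspan]; trivial
    obtain ⟨c, hc⟩ := (Submodule.mem_span_range_iff_exists_fun K).mp hmem
    have hc0 : ∀ v, c v = 0 := by
      intro v
      have h0 := hB2 v
      rw [← hc, map_sum, LinearMap.sum_apply] at h0
      simp only [map_smul, LinearMap.smul_apply, hB, smul_eq_mul, mul_ite, mul_zero] at h0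
      rw [Finset.sum_ite_eq' Finset.univ v (fun w => c w * q ^ len w)] at h0
      simp only [Finset.mem_univ, if_true] at h0
      exact (mul_eq_zero.mp h0).resolve_right (pow_ne_zero _ hq)
    rw [← hc]
    simp [hc0]

end
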